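/- Let X_1,…,X_n be independent real random variables with E g_i(X_i) = 0, Σ_{i=1}^n E g_i(X_i)^2 = 1, and suppose Σ_{i=1}^n E|g_i(X_i)|^p ≤ 1/2 for some p > 2. Then δ := ( (2(p−2)^{p−2}/(p−1)^{p−1}) Σ_{i=1}^n E|g_i(X_i)|^p )^{1/(p−2)} satisfies Σ_{i=1}^n E[ |g_i(X_i)| · min(δ, |g_i(X_i)|) ] ≥ 1/2. -/

import Mathlib

open MeasureTheory ProbabilityTheory

lemma amgm_aux {q t : ℝ} (hq : 0 < q) (ht0 : 0 ≤ t) (ht1 : t ≤ 1) :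
    (1 - t) * t ^ q ≤ q ^ q / (q + 1) ^ (q + 1) := by
  have hq1 : (0:ℝ) < q + 1 := by linarith
  have hw₁ : (0:ℝ) ≤ 1 / (q + 1) := by positivity
  have hw₂ : (0:ℝ) ≤ q / (q + 1) := by positivity
  have hw : 1 / (q + 1) + q / (q + 1) = 1 := by field_simp; ring
  have hp₁ : (0:ℝ) ≤ (q + 1) * (1 - t) := by nlinarith
  have hp₂ : (0:ℝ) ≤ (q + 1) * t / q := by positivity
  have h := Real.geom_mean_le_arith_mean2_weighted hw₁ hw₂ hp₁ hp₂ hw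
  have harith : 1 / (q + 1) * ((q + 1) * (1 - t)) + q / (q + 1) * ((q + 1) * t / q) = 1 := by
    field_simp
    ring
  rw [harith] at h
  have hbase : (0:ℝ) ≤ ((q+1)*(1-t)) ^ (1/(q+1)) * ((q+1)*t/q) ^ (q/(q+1)) := by positivity
  have h2 : (((q+1)*(1-t)) ^ (1/(q+1)) * ((q+1)*t/q) ^ (q/(q+1))) ^ (q+1) ≤ 1 := by
    calc (((q+1)*(1-t)) ^ (1/(q+1)) * ((q+1)*t/q) ^ (q/(q+1))) ^ (q+1)
        ≤ (1:ℝ) ^ (q+1) := Real.rpow_le_rpow hbase h (le_of_lt hq1)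
      _ = 1 := Real.one_rpow _
  rw [Real.mul_rpow (Real.rpow_nonneg hp₁ _) (Real.rpow_nonneg hp₂ _),
    ← Real.rpow_mul hp₁, ← Real.rpow_mul hp₂] at h2
  rw [show 1/(q+1)*(q+1) = (1:ℝ) from by field_simp, show q/(q+1)*(q+1) = q from by field_simp,
    Real.rpow_one] at h2
  have hdiv : ((q+1)*t/q) ^ q = (q+1)^q * t^q / q^q := by
    rw [Real.div_rpow (by positivity) hq.le, Real.mul_rpow hq1.le ht0]
  rw [hdiv] at h2
  have hqq : (0:ℝ) < q ^ q := Real.rpow_pos_of_pos hq q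
  have hq1q : (0:ℝ) < (q+1) ^ q := Real.rpow_pos_of_pos hq1 q
  rw [Real.rpow_add hq1, Real.rpow_one, le_div_iff₀ (by positivity)]
  have h3 : (q + 1) * (1 - t) * ((q + 1) ^ q * t ^ q / q ^ q) * q ^ q ≤ 1 * q ^ q :=
    mul_le_mul_of_nonneg_right h2 hqq.le
  calc (1 - t) * t ^ q * ((q+1)^q * (q+1))
      = (q + 1) * (1 - t) * ((q + 1) ^ q * t ^ q / q ^ q) * q ^ q := by
        field_simp
    _ ≤ 1 * q ^ q := h3
    _ = q ^ q := one_mul _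

lemma pointwise_aux {p δ a : ℝ} (hp : 2 < p) (hδ : 0 < δ) (ha : 0 ≤ a) :
    a ^ 2 - (p-2) ^ (p-2) / (p-1) ^ (p-1) * a ^ p / δ ^ (p-2) ≤ a * min δ a := by
  have hq : (0:ℝ) < p - 2 := by linarith
  have hK : (0:ℝ) < (p-2) ^ (p-2) / (p-1) ^ (p-1) := by
    have h1 : (0:ℝ) < (p-2)^(p-2) := Real.rpow_pos_of_pos hq _
    have h2 : (0:ℝ) < (p-1)^(p-1) := Real.rpow_pos_of_pos (by linarith) _
    positivity
  rcases le_or_gt a δ with h | h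
  · rw [min_eq_right h]
    have hN : 0 ≤ (p-2) ^ (p-2) / (p-1) ^ (p-1) * a ^ p / δ ^ (p-2) := by
      have := Real.rpow_nonneg ha p
      have := (Real.rpow_pos_of_pos hδ (p-2)).le
      positivity
    nlinarith [sq_nonneg a, sq a]
  · -- δ < a
    have ha' : 0 < a := lt_trans hδ h
    set t := δ / a with ht_def
    have ht0 : 0 < t := div_pos hδ ha'
    have ht1 : t ≤ 1 := by rw [div_le_one ha']; exact h.le
    have hamgm := amgm_aux hq ht0.le ht1
    rw [show p - 2 + 1 = p - 1 from by ring] at hamgm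
    have htq : (0:ℝ) < t ^ (p-2) := Real.rpow_pos_of_pos ht0 _
    -- a^p = a^2 * a^(p-2)
    have hap : a ^ p = a ^ 2 * a ^ (p-2) := by
      rw [← Real.rpow_natCast a 2, ← Real.rpow_add ha']
      congr 1
      push_cast
      ring
    have hδa : δ = a * t := by rw [ht_def]; field_simp
    have hδq : δ ^ (p-2) = a ^ (p-2) * t ^ (p-2) := by
      rw [hδa, Real.mul_rpow ha ht0.le]
    have haq : (0:ℝ) < a ^ (p-2) := Real.rpow_pos_of_pos ha' _
    rw [min_eq_left h.le]
    -- K * a^p / δ^(p-2) = K * a^2 / t^(p-2)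
    have key : (p-2) ^ (p-2) / (p-1) ^ (p-1) * a ^ p / δ ^ (p-2)
        = (p-2) ^ (p-2) / (p-1) ^ (p-1) * a ^ 2 / t ^ (p-2) := by
      calc (p-2) ^ (p-2) / (p-1) ^ (p-1) * a ^ p / δ ^ (p-2)
          = (p-2) ^ (p-2) / (p-1) ^ (p-1) * a ^ 2 * a ^ (p-2) / (t ^ (p-2) * a ^ (p-2)) := by
            rw [hap, hδq]; ring
        _ = (p-2) ^ (p-2) / (p-1) ^ (p-1) * a ^ 2 / t ^ (p-2) := by
            rw [mul_div_mul_right _ _ haq.ne']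
    rw [key]
    -- from amgm : (1-t) * t^(p-2) ≤ K
    have h1 : (1 - t) * a ^ 2 ≤ (p-2) ^ (p-2) / (p-1) ^ (p-1) * a ^ 2 / t ^ (p-2) := by
      rw [le_div_iff₀ htq]
      have := mul_le_mul_of_nonneg_right hamgm (sq_nonneg a)
      nlinarith [sq_nonneg a]
    have haδ : a * δ = a ^ 2 * t := by rw [hδa, sq]; ring
    nlinarith [sq_nonneg a]






lemma sq_le_one_add_rpow {x p : ℝ} (hp : 2 ≤ p) : x ^ 2 ≤ 1 + |x| ^ p := by
  have h2 : x ^ 2 = |x| ^ (2:ℝ) := by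
    rw [Real.rpow_two, sq_abs]
  rcases le_or_gt (|x|) 1 with h | h
  · have : |x| ^ (2:ℝ) ≤ 1 := Real.rpow_le_one (abs_nonneg x) h (by norm_num)
    have : (0:ℝ) ≤ |x| ^ p := Real.rpow_nonneg (abs_nonneg x) p
    linarith [Real.rpow_le_one (abs_nonneg x) h (by norm_num : (0:ℝ) ≤ 2)]
  · have : |x| ^ (2:ℝ) ≤ |x| ^ p := Real.rpow_le_rpow_of_exponent_le h.le hp
    linarith [Real.rpow_nonneg (abs_nonneg x) p]


theorem delta_choice_satisfies_condition {Ω : Type*} [MeasurableSpace Ω] (μ : Measure Ω)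
    [IsProbabilityMeasure μ] (n : ℕ) (X : Fin n → Ω → ℝ) (g : Fin n → ℝ → ℝ)
    (hmeasX : ∀ i, Measurable (X i)) (hmeasg : ∀ i, Measurable (g i))
    (hindep : iIndepFun X μ)
    (hint : ∀ i, Integrable (fun ω => g i (X i ω)) μ)
    (hmean : ∀ i, ∫ ω, g i (X i ω) ∂μ = 0)
    (hvar : ∑ i, ∫ ω, (g i (X i ω)) ^ 2 ∂μ = 1)
    (p : ℝ) (hp : 2 < p)
    (hintp : ∀ i, Integrable (fun ω => |g i (X i ω)| ^ p) μ)
    (hmom : ∑ i, ∫ ω, |g i (X i ω)| ^ p ∂μ ≤ 1 / 2) :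
    ∑ i, ∫ ω, |g i (X i ω)| *
        min ((2 * (p - 2) ^ (p - 2) / (p - 1) ^ (p - 1) *
          ∑ j, ∫ ω', |g j (X j ω')| ^ p ∂μ) ^ (1 / (p - 2))) |g i (X i ω)| ∂μ ≥ 1 / 2 := by
  have hq : (0:ℝ) < p - 2 := by linarith
  have hKpos : (0:ℝ) < (p - 2) ^ (p - 2) / (p - 1) ^ (p - 1) := by
    have h1 : (0:ℝ) < (p-2)^(p-2) := Real.rpow_pos_of_pos hq _
    have h2 : (0:ℝ) < (p-1)^(p-1) := Real.rpow_pos_of_pos (by linarith) _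
    positivity
  set K : ℝ := (p - 2) ^ (p - 2) / (p - 1) ^ (p - 1) with hK_def
  set S : ℝ := ∑ j, ∫ ω', |g j (X j ω')| ^ p ∂μ with hS_def
  have hmeasgX : ∀ i, Measurable (fun ω => g i (X i ω)) :=
    fun i => (hmeasg i).comp (hmeasX i)
  have hterm_nonneg : ∀ i : Fin n, 0 ≤ ∫ ω, |g i (X i ω)| ^ p ∂μ := fun i =>
    integral_nonneg fun ω => Real.rpow_nonneg (abs_nonneg _) p
  -- S > 0
  have hSpos : 0 < S := by
    rcases lt_or_ge 0 S with h | h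
    · exact h
    have hS0 : S = 0 := le_antisymm h (Finset.sum_nonneg fun i _ => hterm_nonneg i)
    have hzero : ∀ i : Fin n, ∫ ω, (g i (X i ω)) ^ 2 ∂μ = 0 := by
      intro i
      have hi0 : ∫ ω, |g i (X i ω)| ^ p ∂μ = 0 := by
        have := (Finset.sum_eq_zero_iff_of_nonneg
          (fun i _ => hterm_nonneg i)).mp hS0 i (Finset.mem_univ i)
        exact this
      have hae : (fun ω => |g i (X i ω)| ^ p) =ᵐ[μ] 0 :=
        (integral_eq_zero_iff_of_nonneg
          (fun ω => Real.rpow_nonneg (abs_nonneg _) p) (hintp i)).mp hi0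
      have hae2 : (fun ω => (g i (X i ω)) ^ 2) =ᵐ[μ] 0 := by
        filter_upwards [hae] with ω hω
        have : |g i (X i ω)| = 0 := by
          by_contra hne
          have habs : 0 < |g i (X i ω)| := lt_of_le_of_ne (abs_nonneg _) (Ne.symm hne)
          exact (Real.rpow_pos_of_pos habs p).ne' hω
        have : g i (X i ω) = 0 := abs_eq_zero.mp this
        simp [this]
      rw [integral_congr_ae hae2]; simp
    rw [Finset.sum_congr rfl (fun i _ => hzero i)] at hvar
    simp at hvar
  -- δ
  set δ : ℝ := (2 * (p - 2) ^ (p - 2) / (p - 1) ^ (p - 1) * S) ^ (1 / (p - 2)) with hδ_def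
  have h2KS : 2 * (p - 2) ^ (p - 2) / (p - 1) ^ (p - 1) * S = 2 * K * S := by
    rw [hK_def]; ring
  have h2KSpos : 0 < 2 * K * S := by positivity
  have hδpos : 0 < δ := by
    rw [hδ_def, h2KS]; exact Real.rpow_pos_of_pos h2KSpos _
  have hδpow : δ ^ (p - 2) = 2 * K * S := by
    rw [hδ_def, h2KS, ← Real.rpow_mul h2KSpos.le, one_div,
      inv_mul_cancel₀ hq.ne', Real.rpow_one]
  -- integrabilities
  have I_sq : ∀ i, Integrable (fun ω => (g i (X i ω)) ^ 2) μ := by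
    intro i
    refine Integrable.mono ((integrable_const 1).add (hintp i))
      (((hmeasgX i).pow_const 2).aestronglyMeasurable) (ae_of_all _ fun ω => ?_)
    have h1 := sq_le_one_add_rpow (x := g i (X i ω)) hp.le
    have h2 : (0:ℝ) ≤ 1 + |g i (X i ω)| ^ p := by
      have := Real.rpow_nonneg (abs_nonneg (g i (X i ω))) p; linarith
    simp only [Pi.add_apply, Real.norm_eq_abs]
    rw [abs_of_nonneg (sq_nonneg (g i (X i ω))), abs_of_nonneg h2]
    exact h1
  have I_min : ∀ i, Integrable (fun ω => |g i (X i ω)| * min δ |g i (X i ω)|) μ := by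
    intro i
    refine Integrable.mono (I_sq i)
      (((hmeasgX i).abs.mul ((measurable_const.min (hmeasgX i).abs))).aestronglyMeasurable)
      (ae_of_all _ fun ω => ?_)
    have h0 : 0 ≤ min δ |g i (X i ω)| := le_min hδpos.le (abs_nonneg _)
    have h1 : |g i (X i ω)| * min δ |g i (X i ω)| ≤ |g i (X i ω)| * |g i (X i ω)| :=
      mul_le_mul_of_nonneg_left (min_le_right _ _) (abs_nonneg _)
    rw [Real.norm_eq_abs, Real.norm_eq_abs, abs_of_nonneg (mul_nonneg (abs_nonneg _) h0),
      abs_of_nonneg (sq_nonneg (g i (X i ω)))]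
    calc |g i (X i ω)| * min δ |g i (X i ω)| ≤ |g i (X i ω)| * |g i (X i ω)| := h1
      _ = (g i (X i ω)) ^ 2 := by rw [abs_mul_abs_self, ← sq]
  -- per-index inequality
  have hstep : ∀ i : Fin n,
      ∫ ω, (g i (X i ω)) ^ 2 ∂μ - K / δ ^ (p - 2) * ∫ ω, |g i (X i ω)| ^ p ∂μ
        ≤ ∫ ω, |g i (X i ω)| * min δ |g i (X i ω)| ∂μ := by
    intro i
    rw [← integral_const_mul, ← integral_sub (I_sq i) ((hintp i).const_mul _)]
    refine integral_mono ((I_sq i).sub ((hintp i).const_mul _)) (I_min i)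
      (fun ω => ?_)
    have hpt := pointwise_aux (p := p) (δ := δ) (a := |g i (X i ω)|) hp hδpos (abs_nonneg _)
    have e1 : |g i (X i ω)| ^ (2:ℕ) = (g i (X i ω)) ^ 2 := sq_abs _
    have e2 : K * |g i (X i ω)| ^ p / δ ^ (p - 2)
        = K / δ ^ (p - 2) * |g i (X i ω)| ^ p := by ring
    rw [hK_def] at e2 ⊢
    simp only []
    rw [← hK_def] at hpt ⊢
    calc (g i (X i ω)) ^ 2 - K / δ ^ (p - 2) * |g i (X i ω)| ^ p
        = |g i (X i ω)| ^ 2 - K * |g i (X i ω)| ^ p / δ ^ (p - 2) := by rw [e1]; ring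
      _ ≤ |g i (X i ω)| * min δ |g i (X i ω)| := hpt
  -- sum up
  have hsum : 1 - K / δ ^ (p - 2) * S
      ≤ ∑ i, ∫ ω, |g i (X i ω)| * min δ |g i (X i ω)| ∂μ := by
    calc 1 - K / δ ^ (p - 2) * S
        = ∑ i, (∫ ω, (g i (X i ω)) ^ 2 ∂μ - K / δ ^ (p - 2) * ∫ ω, |g i (X i ω)| ^ p ∂μ) := by
          rw [Finset.sum_sub_distrib, ← Finset.mul_sum, hvar, ← hS_def]
      _ ≤ ∑ i, ∫ ω, |g i (X i ω)| * min δ |g i (X i ω)| ∂μ :=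
          Finset.sum_le_sum fun i _ => hstep i
  have hhalf : 1 - K / δ ^ (p - 2) * S = 1 / 2 := by
    rw [hδpow]
    field_simp
    ring
  rw [ge_iff_le, ← hhalf]
  exact hsum
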